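/- arXiv:2605.30891 — 2 statements merged into one kernel-verified Lean document; each statement's English description precedes it below -/
import Mathlib

section
/- If λ_k = c_λ (k+1)^{(p−2)/2} for all k ∈ ℕ, then for every k ≥ 1, min_{0 ≤ i < k} ‖∇f(x_i)‖ ≤ (c_λ^{1/p}/√k) · (2Δ + L (L/c_λ)^{2/(p−2)} (1 + log k))^{(p−1)/p}. -/
open scoped Classical
open scoped RealInnerProductSpace

open Real RealInnerProductSpace in
private lemma hor_descent {E : Type*} [NormedAddCommGroup E] [InnerProductSpace ℝ E]
    [CompleteSpace E]
    (f : E → ℝ) (f' : E → E) (hf : ∀ y, HasGradientAt f (f' y) y)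
    (L : ℝ) (hL : 0 ≤ L) (hlip : ∀ y z, ‖f' y - f' z‖ ≤ L * ‖y - z‖)
    (x s : E) : f (x + s) ≤ f x + ⟪f' x, s⟫ + L / 2 * ‖s‖ ^ 2 := by
  set φ : ℝ → ℝ := fun t => f (x + t • s) - t * ⟪f' x, s⟫ - L * t ^ 2 / 2 * ‖s‖ ^ 2 with hφdef
  have key : ∀ t : ℝ, HasDerivAt φ
      (⟪f' (x + t • s), s⟫ - ⟪f' x, s⟫ - L * t * ‖s‖ ^ 2) t := by
    intro t
    have h1 : HasDerivAt (fun t : ℝ => x + t • s) s t := by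
      simpa using ((hasDerivAt_id t).smul_const s).const_add x
    have h2 : HasDerivAt (fun t : ℝ => f (x + t • s)) ⟪f' (x + t • s), s⟫ t := by
      have h := (hf (x + t • s)).hasFDerivAt.comp_hasDerivAt t h1
      simp only [Function.comp_def] at h
      exact h.congr_deriv (by simp)
    have h3 : HasDerivAt (fun t : ℝ => t * ⟪f' x, s⟫) ⟪f' x, s⟫ t := by
      simpa using (hasDerivAt_id t).mul_const ⟪f' x, s⟫
    have h4 : HasDerivAt (fun t : ℝ => L * t ^ 2 / 2 * ‖s‖ ^ 2) (L * t * ‖s‖ ^ 2) t := by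
      have := ((hasDerivAt_pow 2 t).const_mul L).div_const 2
      have h5 := this.mul_const (‖s‖ ^ 2)
      exact h5.congr_deriv (by ring)
    exact (h2.sub h3).sub h4
  have hd : ∀ t : ℝ, DifferentiableAt ℝ φ t := fun t => (key t).differentiableAt
  have hanti : AntitoneOn φ (Set.Icc 0 1) := by
    apply antitoneOn_of_deriv_nonpos (convex_Icc 0 1)
    · exact (fun t _ => (hd t).continuousAt.continuousWithinAt)
    · exact fun t _ => (hd t).differentiableWithinAt
    · intro t ht
      rw [interior_Icc] at ht
      rw [(key t).deriv]
      have h6 : ⟪f' (x + t • s), s⟫ - ⟪f' x, s⟫ = ⟪f' (x + t • s) - f' x, s⟫ := by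
        rw [inner_sub_left]
      rw [h6]
      have h7 : ⟪f' (x + t • s) - f' x, s⟫ ≤ ‖f' (x + t • s) - f' x‖ * ‖s‖ :=
        real_inner_le_norm _ _
      have h8 : ‖f' (x + t • s) - f' x‖ ≤ L * (t * ‖s‖) := by
        have := hlip (x + t • s) x
        simpa [norm_smul, abs_of_pos ht.1] using this
      nlinarith [norm_nonneg s, mul_nonneg (mul_nonneg hL ht.1.le) (sq_nonneg ‖s‖)]
  have h01 := hanti (Set.left_mem_Icc.mpr zero_le_one) (Set.right_mem_Icc.mpr zero_le_one)
    zero_le_one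
  simp only [hφdef, zero_smul, one_smul, add_zero] at h01
  nlinarith [h01]

open Real in
private lemma hor_aux_small (p c L t g : ℝ) (hp : 2 < p) (hc : 0 < c) (hL : 0 < L)
    (ht : 1 ≤ t) (hg : 0 < g)
    (hbig : 1 < L * (c * t ^ ((p-2)/2) * g ^ (p-2)) ^ (-(1:ℝ)/(p-1))) :
    ((c * t ^ ((p-2)/2) * g ^ (p-2)) ^ (-(1:ℝ)/(p-1))) ^ 2 * g ^ 2 ≤ (L/c) ^ (2/(p-2)) / t := by
  have hp2 : (0:ℝ) < p - 2 := by linarith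
  have hp1 : (0:ℝ) < p - 1 := by linarith
  have ht0 : (0:ℝ) < t := by linarith
  set lam : ℝ := c * t ^ ((p-2)/2) with hlamdef
  have hlam : 0 < lam := mul_pos hc (rpow_pos_of_pos ht0 _)
  set A : ℝ := lam * g ^ (p-2) with hAdef
  have hA : 0 < A := mul_pos hlam (rpow_pos_of_pos hg _)
  set b : ℝ := A ^ ((1:ℝ)/(p-1)) with hbdef
  have hb : 0 < b := rpow_pos_of_pos hA _
  have hη : A ^ (-(1:ℝ)/(p-1)) = b⁻¹ := by rw [neg_div, Real.rpow_neg hA.le, hbdef]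
  have hbL : b < L := by
    rw [hη] at hbig
    have h := mul_lt_mul_of_pos_left hbig hb
    have : b * (L * b⁻¹) = L := by field_simp
    nlinarith
  have hAL : A < L ^ (p-1) := by
    have h := Real.rpow_lt_rpow (Real.rpow_nonneg hA.le _) hbL hp1
    rwa [← Real.rpow_mul hA.le, one_div_mul_cancel hp1.ne', Real.rpow_one] at h
  set e : ℝ := 2/(p-2) - 2/(p-1) with hedef
  have he : 0 < e := by
    rw [hedef]
    have : 2/(p-1) < 2/(p-2) := by
      apply div_lt_div_of_pos_left (by norm_num) hp2; linarith
    linarith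
  have e1 : (A ^ (-(1:ℝ)/(p-1))) ^ 2 = A ^ (-2/(p-1) : ℝ) := by
    rw [← Real.rpow_natCast (A ^ (-(1:ℝ)/(p-1))) 2, ← Real.rpow_mul hA.le]
    norm_num
    congr 1
    ring
  have e2 : g ^ 2 = (A / lam) ^ ((2:ℝ)/(p-2)) := by
    have hd : A / lam = g ^ (p-2) := by rw [hAdef]; field_simp
    rw [hd, ← Real.rpow_mul hg.le]
    rw [show (p-2) * (2/(p-2)) = (2:ℝ) by field_simp]
    rw [show ((2:ℝ)) = ((2:ℕ):ℝ) by norm_num, Real.rpow_natCast]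
  have emul : A ^ (-2/(p-1) : ℝ) * A ^ ((2:ℝ)/(p-2)) = A ^ e := by
    rw [← Real.rpow_add hA, hedef]; congr 1; ring
  have e3 : A ^ (-2/(p-1) : ℝ) * (A ^ ((2:ℝ)/(p-2)) / lam ^ ((2:ℝ)/(p-2)))
      = A ^ e / lam ^ ((2:ℝ)/(p-2)) := by
    rw [← mul_div_assoc, emul]
  rw [e1, e2, Real.div_rpow hA.le hlam.le, e3]
  have e4 : lam ^ ((2:ℝ)/(p-2)) = c ^ ((2:ℝ)/(p-2)) * t := by
    rw [hlamdef, Real.mul_rpow hc.le (rpow_pos_of_pos ht0 _).le, ← Real.rpow_mul ht0.le]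
    rw [show (p-2)/2 * (2/(p-2)) = (1:ℝ) by field_simp, Real.rpow_one]
  have e5 : (L/c) ^ (2/(p-2)) = L ^ ((2:ℝ)/(p-2)) / c ^ ((2:ℝ)/(p-2)) :=
    Real.div_rpow hL.le hc.le _
  have hAe : A ^ e ≤ L ^ ((2:ℝ)/(p-2)) := by
    have h := Real.rpow_le_rpow hA.le hAL.le he.le
    rwa [← Real.rpow_mul hL.le, show (p-1)*e = 2/(p-2) by rw [hedef]; field_simp; ring] at h
  rw [e4, e5, div_div]
  gcongr

set_option maxHeartbeats 1000000 in
/-- Parameter-free rate with `λ_k = c_λ (k+1)^{(p-2)/2}`: for all `k ≥ 1`,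
`min_{0 ≤ i < k} ‖∇f(x_i)‖ ≤ (c_λ^{1/p}/√k) (2Δ + L (L/c_λ)^{2/(p-2)} (1 + log k))^{(p-1)/p}`. -/
theorem hor_gd_rate_log
    {E : Type*} [NormedAddCommGroup E] [InnerProductSpace ℝ E] [CompleteSpace E]
    (f : E → ℝ) (f' : E → E)
    (hf : ∀ y, HasGradientAt f (f' y) y)
    (L : ℝ) (hL : 0 < L)
    (hlip : ∀ y z, ‖f' y - f' z‖ ≤ L * ‖y - z‖)
    (hbdd : BddBelow (Set.range f))
    (p : ℝ) (hp : 2 < p)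
    (c : ℝ) (hc : 0 < c)
    (lam : ℕ → ℝ) (hlam : ∀ k, lam k = c * ((k : ℝ) + 1) ^ ((p - 2) / 2))
    (x s : ℕ → E)
    (hs : ∀ k, s k = if f' (x k) = 0 then 0
      else -((lam k * ‖f' (x k)‖ ^ (p - 2)) ^ (-(1 : ℝ) / (p - 1))) • f' (x k))
    (hx : ∀ k, x (k + 1) = x k + s k)
    (Δ : ℝ) (hΔ : Δ = f (x 0) - ⨅ y, f y)
    (k : ℕ) (hk : 1 ≤ k) :
    (Finset.range k).inf' (Finset.nonempty_range_iff.mpr (by omega))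
        (fun i => ‖f' (x i)‖) ≤
      c ^ ((1 : ℝ) / p) / Real.sqrt k *
        (2 * Δ + L * (L / c) ^ (2 / (p - 2)) * (1 + Real.log k)) ^ ((p - 1) / p) := by
  have hp2 : (0:ℝ) < p - 2 := by linarith
  have hp1 : (0:ℝ) < p - 1 := by linarith
  have hppos : (0:ℝ) < p := by linarith
  set g : ℕ → ℝ := fun i => ‖f' (x i)‖ with hgdef
  set η : ℕ → ℝ := fun i => (lam i * g i ^ (p - 2)) ^ (-(1 : ℝ) / (p - 1)) with hηdef
  have hgnn : ∀ i, 0 ≤ g i := fun i => norm_nonneg _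
  have hlampos : ∀ i, 0 < lam i := by
    intro i; rw [hlam]
    exact mul_pos hc (Real.rpow_pos_of_pos (by positivity) _)
  have hηnn : ∀ i, 0 ≤ η i := fun i =>
    Real.rpow_nonneg (mul_nonneg (hlampos i).le (Real.rpow_nonneg (hgnn i) _)) _
  have hηi : ∀ i, η i = (c * ((i:ℝ) + 1) ^ ((p-2)/2) * g i ^ (p - 2)) ^ (-(1:ℝ)/(p-1)) := by
    intro i; rw [hηdef]; simp only; rw [hlam i]
  set C : ℝ := L / 2 * (L / c) ^ (2 / (p - 2)) with hCdef
  have hC0 : 0 ≤ C := by positivity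
  -- per step descent
  have step : ∀ i, f (x (i+1)) ≤ f (x i) - η i * g i ^ 2 + L / 2 * η i ^ 2 * g i ^ 2 := by
    intro i
    rw [hx i]
    by_cases h0 : f' (x i) = 0
    · have hg0 : g i = 0 := by simp [hgdef, h0]
      have hs0 : s i = 0 := by rw [hs i, if_pos h0]
      rw [hs0, hg0]
      simp
    · have hd := hor_descent f f' hf L hL.le hlip (x i) (s i)
      have hsi : s i = -(η i) • f' (x i) := by
        rw [hs i, if_neg h0, hηdef]
      have hinner : ⟪f' (x i), s i⟫ = -(η i * g i ^ 2) := by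
        rw [hsi, inner_smul_right, real_inner_self_eq_norm_sq]
        ring_nf
        rfl
      have hnorm : ‖s i‖ = η i * g i := by
        rw [hsi, norm_smul]
        simp [abs_of_nonneg (hηnn i), hgdef]
      rw [hinner, hnorm] at hd
      refine hd.trans (le_of_eq ?_)
      ring
  -- per step with the regularized bound
  have step2 : ∀ i, 1/2 * (η i * g i ^ 2) ≤ f (x i) - f (x (i+1)) + C / ((i:ℝ)+1) := by
    intro i
    have hCi : 0 ≤ C / ((i:ℝ)+1) := by positivity
    by_cases hcase : L * η i ≤ 1
    · have h1 : L/2 * η i ^ 2 * g i ^ 2 ≤ 1/2 * (η i * g i ^ 2) := by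
        nlinarith [hηnn i, sq_nonneg (g i), mul_nonneg (hηnn i) (sq_nonneg (g i))]
      linarith [step i]
    · push_neg at hcase
      have hgpos : 0 < g i := by
        rcases (hgnn i).eq_or_lt with h|h
        · exfalso
          have hηz : η i = 0 := by
            rw [hηi i, ← h, Real.zero_rpow hp2.ne', mul_zero,
              Real.zero_rpow (by
                rw [neg_div]
                exact neg_ne_zero.mpr (ne_of_gt (div_pos one_pos hp1)))]
          rw [hηz, mul_zero] at hcase
          linarith
        · exact h
      have hbig : 1 < L * (c * ((i:ℝ)+1) ^ ((p-2)/2) * g i ^ (p-2)) ^ (-(1:ℝ)/(p-1)) := by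
        rw [← hηi i]; exact hcase
      have hb := hor_aux_small p c L ((i:ℝ)+1) (g i) hp hc hL (by
        have : (0:ℝ) ≤ (i:ℝ) := Nat.cast_nonneg i
        linarith) hgpos hbig
      rw [← hηi i] at hb
      have h2 : L/2 * η i ^ 2 * g i ^ 2 ≤ C / ((i:ℝ)+1) := by
        have h3 := mul_le_mul_of_nonneg_left hb (by linarith : (0:ℝ) ≤ L/2)
        calc L/2 * η i ^ 2 * g i ^ 2 = L/2 * (η i ^ 2 * g i ^ 2) := by ring
          _ ≤ L/2 * ((L/c) ^ (2/(p-2)) / ((i:ℝ)+1)) := h3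
          _ = C / ((i:ℝ)+1) := by rw [hCdef]; ring
      have h4 : 0 ≤ η i * g i ^ 2 := mul_nonneg (hηnn i) (sq_nonneg _)
      linarith [step i]
  -- telescoping sum
  have hfk : ⨅ y, f y ≤ f (x k) := ciInf_le hbdd (x k)
  have hΔ0 : 0 ≤ Δ := by
    have := ciInf_le hbdd (x 0)
    rw [hΔ]; linarith
  have hharm : ∑ i ∈ Finset.range k, (((i:ℝ)+1))⁻¹ ≤ 1 + Real.log k := by
    have h1 := harmonic_le_one_add_log k
    have h2 : ((harmonic k : ℚ) : ℝ) = ∑ i ∈ Finset.range k, (((i:ℝ))+1)⁻¹ := by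
      rw [harmonic]
      push_cast
      rfl
    rw [h2] at h1
    exact h1
  have hsum : ∑ i ∈ Finset.range k, (1/2 * (η i * g i ^ 2)) ≤ Δ + C * (1 + Real.log k) := by
    have h1 := Finset.sum_le_sum (fun i (_ : i ∈ Finset.range k) => step2 i)
    rw [Finset.sum_add_distrib, Finset.sum_range_sub' (fun i => f (x i)) k] at h1
    have h2 : ∑ i ∈ Finset.range k, C / ((i:ℝ)+1)
        = C * ∑ i ∈ Finset.range k, (((i:ℝ)+1))⁻¹ := by
      rw [Finset.mul_sum]
      exact Finset.sum_congr rfl (fun i _ => div_eq_mul_inv _ _)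
    rw [h2] at h1
    have h3 : C * ∑ i ∈ Finset.range k, (((i:ℝ)+1))⁻¹ ≤ C * (1 + Real.log k) :=
      mul_le_mul_of_nonneg_left hharm hC0
    have h4 : f (x 0) - f (x k) ≤ Δ := by rw [hΔ]; linarith
    linarith
  set B : ℝ := 2 * Δ + L * (L / c) ^ (2 / (p - 2)) * (1 + Real.log k) with hBdef
  have hlogk : 0 ≤ Real.log k := Real.log_nonneg (by exact_mod_cast hk)
  have hB0 : 0 ≤ B := by
    rw [hBdef]
    have : 0 ≤ L * (L / c) ^ (2 / (p - 2)) * (1 + Real.log k) := by positivity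
    linarith
  have hsum2 : ∑ i ∈ Finset.range k, (η i * g i ^ 2) ≤ B := by
    have h1 : ∑ i ∈ Finset.range k, (η i * g i ^ 2)
        = 2 * ∑ i ∈ Finset.range k, (1/2 * (η i * g i ^ 2)) := by
      rw [Finset.mul_sum]
      congr 1 with i
      ring
    rw [h1, hBdef]
    have : 2 * C = L * (L / c) ^ (2 / (p - 2)) := by rw [hCdef]; ring
    nlinarith [hsum]
  -- main bound for any lower bound m of the gradients
  set K : ℝ := (k:ℝ) with hKdef
  have hK1 : (1:ℝ) ≤ K := by rw [hKdef]; exact_mod_cast hk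
  have hK0 : (0:ℝ) < K := by linarith
  have main : ∀ m : ℝ, 0 ≤ m → (∀ i ∈ Finset.range k, m ≤ g i) →
      m ≤ c ^ ((1 : ℝ) / p) / Real.sqrt K * B ^ ((p - 1) / p) := by
    intro m hm0 hmle
    have hRHS0 : 0 ≤ c ^ ((1 : ℝ) / p) / Real.sqrt K * B ^ ((p - 1) / p) := by
      apply mul_nonneg
      · exact div_nonneg (Real.rpow_nonneg hc.le _) (Real.sqrt_nonneg _)
      · exact Real.rpow_nonneg hB0 _
    rcases hm0.eq_or_lt with hm | hm
    · rw [← hm]; exact hRHS0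
    set c1 : ℝ := c ^ ((1:ℝ)/(p-1)) with hc1def
    have hc1 : 0 < c1 := Real.rpow_pos_of_pos hc _
    set a2 : ℝ := (p-2)/(2*(p-1)) with ha2def
    have ha2 : 0 ≤ a2 := by positivity
    set Q : ℝ := m ^ (p/(p-1)) / (c1 * K ^ a2) with hQdef
    have hlow : ∀ i ∈ Finset.range k, Q ≤ η i * g i ^ 2 := by
      intro i hi
      have hgipos : 0 < g i := lt_of_lt_of_le hm (hmle i hi)
      have hik : ((i:ℝ)+1) ≤ K := by
        rw [hKdef]
        have : i + 1 ≤ k := Finset.mem_range.mp hi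
        exact_mod_cast this
      have hi1 : (0:ℝ) < (i:ℝ)+1 := by positivity
      have hsplit : η i * g i ^ 2 = g i ^ (p/(p-1)) / (c1 * ((i:ℝ)+1) ^ a2) := by
        rw [hηi i, Real.mul_rpow (by positivity) (Real.rpow_nonneg (hgnn i) _),
          Real.mul_rpow hc.le (by positivity),
          ← Real.rpow_mul (by positivity : (0:ℝ) ≤ (i:ℝ)+1),
          ← Real.rpow_mul (hgnn i)]
        have hgg : g i ^ ((p-2) * (-(1:ℝ)/(p-1))) * g i ^ 2 = g i ^ (p/(p-1)) := by
          rw [← Real.rpow_natCast (g i) 2, ← Real.rpow_add hgipos]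
          congr 1
          push_cast
          field_simp
          try ring
        have hcc : c ^ (-(1:ℝ)/(p-1)) = c1⁻¹ := by
          rw [hc1def, neg_div, Real.rpow_neg hc.le]
        have hii : ((i:ℝ)+1) ^ ((p-2)/2 * (-(1:ℝ)/(p-1))) = (((i:ℝ)+1) ^ a2)⁻¹ := by
          rw [show (p-2)/2 * (-(1:ℝ)/(p-1)) = -a2 by rw [ha2def]; field_simp; try ring,
            Real.rpow_neg hi1.le]
        calc c ^ (-(1:ℝ)/(p-1)) * ((i:ℝ)+1) ^ ((p-2)/2 * (-(1:ℝ)/(p-1)))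
              * g i ^ ((p-2) * (-(1:ℝ)/(p-1))) * g i ^ 2
            = c ^ (-(1:ℝ)/(p-1)) * ((i:ℝ)+1) ^ ((p-2)/2 * (-(1:ℝ)/(p-1)))
              * (g i ^ ((p-2) * (-(1:ℝ)/(p-1))) * g i ^ 2) := by ring
          _ = c1⁻¹ * (((i:ℝ)+1) ^ a2)⁻¹ * g i ^ (p/(p-1)) := by rw [hgg, hcc, hii]
          _ = g i ^ (p/(p-1)) / (c1 * ((i:ℝ)+1) ^ a2) := by
              rw [eq_div_iff (by positivity : (0:ℝ) < c1 * ((i:ℝ)+1) ^ a2).ne']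
              field_simp
      rw [hsplit, hQdef]
      gcongr
      exact hmle i hi
    have hcard := Finset.card_nsmul_le_sum (Finset.range k) (fun i => η i * g i ^ 2) Q hlow
    rw [Finset.card_range, nsmul_eq_mul] at hcard
    have hKQ : K * Q ≤ B := le_trans (by rw [hKdef]; exact hcard) hsum2
    have hQB : Q ≤ B / K := by rw [le_div_iff₀ hK0]; nlinarith
    have hmP : m ^ (p/(p-1)) ≤ B / K * (c1 * K ^ a2) := by
      rw [hQdef] at hQB
      exact (div_le_iff₀ (by positivity)).mp hQB
    have hfin := Real.rpow_le_rpow (Real.rpow_nonneg hm.le _) hmP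
      (by positivity : (0:ℝ) ≤ (p-1)/p)
    have hLHS : (m ^ (p/(p-1))) ^ ((p-1)/p) = m := by
      rw [← Real.rpow_mul hm.le, show p/(p-1) * ((p-1)/p) = 1 by field_simp, Real.rpow_one]
    have hRHSeq : (B / K * (c1 * K ^ a2)) ^ ((p-1)/p)
        = c ^ ((1 : ℝ) / p) / Real.sqrt K * B ^ ((p-1)/p) := by
      have hea : -(p/(2*(p-1))) = a2 - 1 := by rw [ha2def]; field_simp; try ring
      have hKa : K ^ a2 / K = K ^ (-(p/(2*(p-1)))) := by
        rw [hea, Real.rpow_sub hK0, Real.rpow_one]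
      have hsp : B / K * (c1 * K ^ a2) = B * (c1 * K ^ (-(p/(2*(p-1))))) := by
        rw [← hKa]; ring
      have he1 : (1:ℝ)/(p-1) * ((p-1)/p) = 1/p := by
        field_simp
      have he2 : -(p/(2*(p-1))) * ((p-1)/p) = -(1/2 : ℝ) := by
        field_simp
        try ring
      have hc1e : c1 ^ ((p-1)/p) = c ^ ((1:ℝ)/p) := by
        rw [hc1def, ← Real.rpow_mul hc.le, he1]
      have hKe : (K ^ (-(p/(2*(p-1))))) ^ ((p-1)/p) = (Real.sqrt K)⁻¹ := by
        rw [← Real.rpow_mul hK0.le, he2, Real.rpow_neg hK0.le, Real.sqrt_eq_rpow]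
      rw [hsp, Real.mul_rpow hB0 (by positivity),
        Real.mul_rpow hc1.le (Real.rpow_nonneg hK0.le _), hc1e, hKe]
      rw [div_eq_mul_inv]
      ring
    rw [hLHS, hRHSeq] at hfin
    exact hfin
  refine main _ ?_ ?_
  · apply Finset.le_inf'
    intro i _
    exact hgnn i
  · intro i hi
    exact Finset.inf'_le _ hi
end

section
/- Fix an integer K ≥ 1 and set λ_k = c_λ K^{(p−3)/3} for all 0 ≤ k < K. Then min_{1 ≤ i ≤ K} ‖∇f(x_i)‖ ≤ (2 c_λ^{1/p}/K^{2/3}) · (12Δ + 2M (M/c_λ)^{3/(p−3)})^{1−1/p}. -/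
open scoped RealInnerProductSpace

section Aux

open Real Set

private lemma rpow_rpow_eq {x : ℝ} (hx : 0 ≤ x) (a b c : ℝ) (h : a * b = c) :
    (x ^ a) ^ b = x ^ c := by
  rw [← Real.rpow_mul hx, h]

private lemma rpow_pow_eq {x : ℝ} (hx : 0 ≤ x) (a : ℝ) (n : ℕ) (c : ℝ) (h : a * n = c) :
    (x ^ a) ^ n = x ^ c := by
  rw [← Real.rpow_natCast (x ^ a) n, ← Real.rpow_mul hx, h]

private lemma taylor_grad {E : Type*} [NormedAddCommGroup E] [InnerProductSpace ℝ E]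
    (f' : E → E) (H : E → E →L[ℝ] E)
    (hf' : ∀ y, HasFDerivAt f' (H y) y)
    (M : ℝ) (hlip : ∀ y z, ‖H y - H z‖ ≤ M * ‖y - z‖) (x s : E) :
    ‖f' (x + s) - f' x - H x s‖ ≤ M / 2 * ‖s‖ ^ 2 := by
  set g : ℝ → E := fun t => f' (x + t • s) - f' x - t • H x s with hgdef
  have line : ∀ t : ℝ, HasDerivAt (fun t : ℝ => x + t • s) s t := by
    intro t
    simpa using ((hasDerivAt_id t).smul_const s).const_add x
  have hg : ∀ t : ℝ, HasDerivAt g (H (x + t • s) s - H x s) t := by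
    intro t
    have h1 : HasDerivAt (fun t : ℝ => f' (x + t • s)) (H (x + t • s) s) t := by
      simpa [Function.comp_def] using (hf' (x + t • s)).comp_hasDerivAt t (line t)
    have h2 : HasDerivAt (fun t : ℝ => t • H x s) (H x s) t := by
      simpa using (hasDerivAt_id t).smul_const (H x s)
    exact (h1.sub_const (f' x)).sub h2
  have key := image_norm_le_of_norm_deriv_right_le_deriv_boundary
    (f := g) (f' := fun t => H (x + t • s) s - H x s) (a := 0) (b := 1)
    (B := fun t : ℝ => M * ‖s‖ ^ 2 / 2 * t ^ 2) (B' := fun t : ℝ => M * ‖s‖ ^ 2 * t)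
    (fun t _ => ((hg t).continuousAt).continuousWithinAt)
    (fun t _ => (hg t).hasDerivWithinAt)
    (by simp [hgdef])
    (fun t => by
      have := (hasDerivAt_pow 2 t).const_mul (M * ‖s‖ ^ 2 / 2)
      refine this.congr_deriv ?_
      push_cast; ring)
    (fun t ht => by
      have h1 : ‖H (x + t • s) s - H x s‖ ≤ ‖H (x + t • s) - H x‖ * ‖s‖ := by
        simpa using (H (x + t • s) - H x).le_opNorm s
      have h2 : ‖H (x + t • s) - H x‖ ≤ M * (t * ‖s‖) := by
        have := hlip (x + t • s) x
        simpa [norm_smul, abs_of_nonneg ht.1] using this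
      calc ‖H (x + t • s) s - H x s‖ ≤ M * (t * ‖s‖) * ‖s‖ :=
            h1.trans (mul_le_mul_of_nonneg_right h2 (norm_nonneg s))
        _ = M * ‖s‖ ^ 2 * t := by ring)
  have h2 : ‖f' (x + s) - f' x - H x s‖ ≤ M * ‖s‖ ^ 2 / 2 * 1 ^ 2 := by
    simpa [hgdef] using key (x := 1) (by norm_num)
  nlinarith [h2]

private lemma taylor_cubic {E : Type*} [NormedAddCommGroup E] [InnerProductSpace ℝ E]
    (f : E → ℝ) (f' : E → E) (H : E → E →L[ℝ] E)
    [CompleteSpace E]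
    (hf : ∀ y, HasGradientAt f (f' y) y)
    (hf' : ∀ y, HasFDerivAt f' (H y) y)
    (M : ℝ) (hlip : ∀ y z, ‖H y - H z‖ ≤ M * ‖y - z‖) (x s : E) :
    f (x + s) ≤ f x + ⟪f' x, s⟫ + 1 / 2 * ⟪H x s, s⟫ + M / 6 * ‖s‖ ^ 3 := by
  set φ : ℝ → ℝ := fun t => f (x + t • s) - f x - t * ⟪f' x, s⟫ - t ^ 2 / 2 * ⟪H x s, s⟫
    with hφdef
  have line : ∀ t : ℝ, HasDerivAt (fun t : ℝ => x + t • s) s t := by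
    intro t
    simpa using ((hasDerivAt_id t).smul_const s).const_add x
  have hφ : ∀ t : ℝ, HasDerivAt φ
      (⟪f' (x + t • s), s⟫ - ⟪f' x, s⟫ - t * ⟪H x s, s⟫) t := by
    intro t
    have h1 : HasDerivAt (fun t : ℝ => f (x + t • s)) (⟪f' (x + t • s), s⟫) t := by
      have := (hf (x + t • s)).hasFDerivAt.comp_hasDerivAt t (line t)
      simpa [InnerProductSpace.toDual_apply_apply, Function.comp_def] using this
    have h2 : HasDerivAt (fun t : ℝ => t * ⟪f' x, s⟫) (⟪f' x, s⟫) t := by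
      simpa using (hasDerivAt_id t).mul_const (⟪f' x, s⟫)
    have h3 : HasDerivAt (fun t : ℝ => t ^ 2 / 2 * ⟪H x s, s⟫) (t * ⟪H x s, s⟫) t := by
      have := ((hasDerivAt_pow 2 t).div_const 2).mul_const (⟪H x s, s⟫)
      refine this.congr_deriv ?_
      push_cast; ring
    exact ((h1.sub_const (f x)).sub h2).sub h3
  have key := image_norm_le_of_norm_deriv_right_le_deriv_boundary
    (f := φ) (f' := fun t => ⟪f' (x + t • s), s⟫ - ⟪f' x, s⟫ - t * ⟪H x s, s⟫)
    (a := 0) (b := 1)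
    (B := fun t : ℝ => M * ‖s‖ ^ 3 / 6 * t ^ 3) (B' := fun t : ℝ => M * ‖s‖ ^ 3 / 2 * t ^ 2)
    (fun t _ => ((hφ t).continuousAt).continuousWithinAt)
    (fun t _ => (hφ t).hasDerivWithinAt)
    (by simp [hφdef])
    (fun t => by
      have := (hasDerivAt_pow 3 t).const_mul (M * ‖s‖ ^ 3 / 6)
      refine this.congr_deriv ?_
      push_cast; ring)
    (fun t ht => by
      have heq : ⟪f' (x + t • s), s⟫ - ⟪f' x, s⟫ - t * ⟪H x s, s⟫
          = ⟪f' (x + t • s) - f' x - H x (t • s), s⟫ := by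
        rw [map_smul]
        simp [inner_sub_left, real_inner_smul_left]
      have hb : ‖f' (x + t • s) - f' x - H x (t • s)‖ ≤ M / 2 * ‖t • s‖ ^ 2 :=
        taylor_grad f' H hf' M hlip x (t • s)
      show ‖(⟪f' (x + t • s), s⟫ - ⟪f' x, s⟫ - t * ⟪H x s, s⟫ : ℝ)‖
          ≤ M * ‖s‖ ^ 3 / 2 * t ^ 2
      rw [heq]
      calc ‖(⟪f' (x + t • s) - f' x - H x (t • s), s⟫ : ℝ)‖
          ≤ ‖f' (x + t • s) - f' x - H x (t • s)‖ * ‖s‖ := by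
            simpa using abs_real_inner_le_norm (f' (x + t • s) - f' x - H x (t • s)) s
        _ ≤ M / 2 * ‖t • s‖ ^ 2 * ‖s‖ :=
            mul_le_mul_of_nonneg_right hb (norm_nonneg s)
        _ = M * ‖s‖ ^ 3 / 2 * t ^ 2 := by
            rw [norm_smul, Real.norm_eq_abs, abs_of_nonneg ht.1]
            ring)
  have h1 := key (x := 1) (by norm_num)
  have h2 : |φ 1| ≤ M * ‖s‖ ^ 3 / 6 := by simpa [Real.norm_eq_abs] using h1
  have := (abs_le.mp h2).2
  simp only [hφdef, one_smul, one_pow, one_mul] at this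
  linarith

/-- Per-step decrease. -/
private lemma step_decrease {E : Type*} [NormedAddCommGroup E] [InnerProductSpace ℝ E]
    [CompleteSpace E]
    (f : E → ℝ) (f' : E → E) (H : E → E →L[ℝ] E)
    (hf : ∀ y, HasGradientAt f (f' y) y)
    (hf' : ∀ y, HasFDerivAt f' (H y) y)
    (M : ℝ) (hlip : ∀ y z, ‖H y - H z‖ ≤ M * ‖y - z‖)
    (p : ℝ) (hp : 3 < p) (lam : ℝ) (hlam : 0 < lam) (x s : E)
    (hopt : ‖f' x + H x s + (lam * ‖s‖ ^ (p - 2)) • s‖ ≤ lam / 2 * ‖s‖ ^ (p - 1))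
    (hdesc : ⟪f' x, s⟫ ≤ 0) :
    f (x + s) ≤ f x - lam / 4 * ‖s‖ ^ p + M / 6 * ‖s‖ ^ 3 := by
  have hn : (0:ℝ) ≤ ‖s‖ := norm_nonneg s
  have e2 : ‖s‖ ^ (p - 2) * ‖s‖ ^ 2 = ‖s‖ ^ p := by
    rw [← Real.rpow_natCast ‖s‖ 2, ← Real.rpow_add' hn (by push_cast; linarith)]
    congr 1; push_cast; ring
  have e1 : ‖s‖ ^ (p - 1) * ‖s‖ = ‖s‖ ^ p := by
    nth_rewrite 2 [← Real.rpow_one ‖s‖]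
    rw [← Real.rpow_add' hn (by linarith)]
    congr 1; ring
  have h1 : ⟪f' x + H x s + (lam * ‖s‖ ^ (p - 2)) • s, s⟫ ≤ lam / 2 * ‖s‖ ^ (p - 1) * ‖s‖ :=
    (real_inner_le_norm _ _).trans (mul_le_mul_of_nonneg_right hopt hn)
  rw [inner_add_left, inner_add_left, real_inner_smul_left, real_inner_self_eq_norm_sq] at h1
  have h2 : ⟪f' x, s⟫ + ⟪H x s, s⟫ ≤ - (lam / 2) * ‖s‖ ^ p := by
    have : lam * ‖s‖ ^ (p - 2) * ‖s‖ ^ 2 = lam * ‖s‖ ^ p := by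
      rw [mul_assoc, e2]
    rw [this] at h1
    rw [mul_assoc, e1] at h1
    linarith
  have h3 := taylor_cubic f f' H hf hf' M hlip x s
  linarith

/-- Per-step gradient bound. -/
private lemma step_grad {E : Type*} [NormedAddCommGroup E] [InnerProductSpace ℝ E]
    (f' : E → E) (H : E → E →L[ℝ] E)
    (hf' : ∀ y, HasFDerivAt f' (H y) y)
    (M : ℝ) (hlip : ∀ y z, ‖H y - H z‖ ≤ M * ‖y - z‖)
    (p : ℝ) (hp : 3 < p) (lam : ℝ) (hlam : 0 < lam) (x s : E)
    (hopt : ‖f' x + H x s + (lam * ‖s‖ ^ (p - 2)) • s‖ ≤ lam / 2 * ‖s‖ ^ (p - 1)) :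
    ‖f' (x + s)‖ ≤ M / 2 * ‖s‖ ^ 2 + 3 * lam / 2 * ‖s‖ ^ (p - 1) := by
  have hn : (0:ℝ) ≤ ‖s‖ := norm_nonneg s
  have tg := taylor_grad f' H hf' M hlip x s
  have e1 : ‖s‖ ^ (p - 2) * ‖s‖ = ‖s‖ ^ (p - 1) := by
    nth_rewrite 2 [← Real.rpow_one ‖s‖]
    rw [← Real.rpow_add' hn (by linarith)]
    congr 1; ring
  have hsmul : ‖(lam * ‖s‖ ^ (p - 2)) • s‖ = lam * ‖s‖ ^ (p - 1) := by
    rw [norm_smul, Real.norm_eq_abs, abs_of_nonneg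
      (mul_nonneg hlam.le (Real.rpow_nonneg hn _)), mul_assoc, e1]
  have hsum : ‖f' x + H x s‖ ≤ lam / 2 * ‖s‖ ^ (p - 1) + lam * ‖s‖ ^ (p - 1) := by
    have : f' x + H x s
        = (f' x + H x s + (lam * ‖s‖ ^ (p - 2)) • s) - (lam * ‖s‖ ^ (p - 2)) • s := by
      abel
    rw [this]
    calc ‖_ - _‖ ≤ ‖f' x + H x s + (lam * ‖s‖ ^ (p - 2)) • s‖ + ‖(lam * ‖s‖ ^ (p - 2)) • s‖ :=
          norm_sub_le _ _
      _ ≤ lam / 2 * ‖s‖ ^ (p - 1) + lam * ‖s‖ ^ (p - 1) := by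
          rw [hsmul]; exact add_le_add hopt le_rfl
  have htri : ‖f' (x + s)‖ ≤ ‖f' (x + s) - f' x - H x s‖ + ‖f' x + H x s‖ := by
    have : f' (x + s) = (f' (x + s) - f' x - H x s) + (f' x + H x s) := by abel
    nth_rewrite 1 [this]
    exact norm_add_le _ _
  linarith

end Aux

set_option maxHeartbeats 1000000 in
/-- Fixed-horizon rate for the higher-order regularized Newton method with
`λ_k = c_λ K^{(p-3)/3}` for `0 ≤ k < K`:
`min_{1 ≤ i ≤ K} ‖∇f(x_i)‖ ≤ (2 c_λ^{1/p}/K^{2/3}) (12Δ + 2M (M/c_λ)^{3/(p-3)})^{1-1/p}`. -/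
theorem hor_newton_rate_fixed_horizon
    {E : Type*} [NormedAddCommGroup E] [InnerProductSpace ℝ E] [CompleteSpace E]
    (f : E → ℝ) (f' : E → E) (H : E → E →L[ℝ] E)
    (hf : ∀ y, HasGradientAt f (f' y) y)
    (hf' : ∀ y, HasFDerivAt f' (H y) y)
    (M : ℝ) (hM : 0 < M)
    (hlip : ∀ y z, ‖H y - H z‖ ≤ M * ‖y - z‖)
    (hbdd : BddBelow (Set.range f))
    (p : ℝ) (hp : 3 < p)
    (c : ℝ) (hc : 0 < c)
    (K : ℕ) (hK : 1 ≤ K)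
    (lam : ℕ → ℝ) (hlam : ∀ k, 0 < lam k)
    (hlamdef : ∀ k < K, lam k = c * (K : ℝ) ^ ((p - 3) / 3))
    (x s : ℕ → E)
    (hx : ∀ k, x (k + 1) = x k + s k)
    (hopt : ∀ k, ‖f' (x k) + H (x k) (s k) + (lam k * ‖s k‖ ^ (p - 2)) • s k‖ ≤
      lam k / 2 * ‖s k‖ ^ (p - 1))
    (hdesc : ∀ k, (⟪f' (x k), s k⟫) ≤ 0)
    (Δ : ℝ) (hΔ : Δ = f (x 0) - ⨅ y, f y) :
    (Finset.Icc 1 K).inf' (Finset.nonempty_Icc.mpr hK) (fun i => ‖f' (x i)‖) ≤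
      2 * c ^ ((1 : ℝ) / p) / (K : ℝ) ^ ((2 : ℝ) / 3) *
        (12 * Δ + 2 * M * (M / c) ^ (3 / (p - 3))) ^ (1 - 1 / p) := by
  have hp0 : (0:ℝ) < p := by linarith
  have hp3 : (0:ℝ) < p - 3 := by linarith
  set Kr : ℝ := (K : ℝ) with hKrdef
  have hKr1 : (1:ℝ) ≤ Kr := by rw [hKrdef]; exact_mod_cast hK
  have hKr0 : (0:ℝ) < Kr := by linarith
  set lam0 : ℝ := c * Kr ^ ((p - 3) / 3) with hlam0def
  have hlam0 : 0 < lam0 := by positivity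
  set A : ℝ := 12 * Δ + 2 * M * (M / c) ^ (3 / (p - 3)) with hAdef
  have hMc : (0:ℝ) < M / c := div_pos hM hc
  have hMcr : (0:ℝ) < (M / c) ^ (3 / (p - 3)) := Real.rpow_pos_of_pos hMc _
  have hΔ0 : 0 ≤ Δ := by
    have h := ciInf_le hbdd (x 0)
    rw [hΔ]; linarith
  have hA : 0 < A := by
    have : 0 < 2 * M * (M / c) ^ (3 / (p - 3)) := by positivity
    simp only [hAdef]; linarith
  set C : ℝ := M / 6 * (M / lam0) ^ (3 / (p - 3)) with hCdef
  have hMl : (0:ℝ) < M / lam0 := div_pos hM hlam0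
  have hC0 : 0 ≤ C := by positivity
  -- per-step combined bound
  have hstep : ∀ k < K, lam0 / 12 * ‖s k‖ ^ p - C ≤ f (x k) - f (x (k + 1)) := by
    intro k hk
    have hlk : lam k = lam0 := hlamdef k hk
    have hdec : f (x (k + 1)) ≤ f (x k) - lam0 / 4 * ‖s k‖ ^ p + M / 6 * ‖s k‖ ^ 3 := by
      rw [hx k]
      have ho := hopt k
      rw [hlk] at ho
      exact step_decrease f f' H hf hf' M hlip p hp lam0 hlam0 (x k) (s k) ho (hdesc k)
    set n : ℝ := ‖s k‖ with hndef
    have hn : 0 ≤ n := norm_nonneg _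
    have hnp : 0 ≤ n ^ p := Real.rpow_nonneg hn _
    set r : ℝ := (M / lam0) ^ ((1:ℝ) / (p - 3)) with hrdef
    have hr0 : 0 < r := Real.rpow_pos_of_pos hMl _
    rcases le_or_gt n r with hcase | hcase
    · have hcube : n ^ 3 ≤ r ^ 3 := pow_le_pow_left₀ hn hcase 3
      have hr3 : r ^ 3 = (M / lam0) ^ (3 / (p - 3)) :=
        rpow_pow_eq hMl.le _ 3 _ (by push_cast; field_simp)
      have : M / 6 * n ^ 3 ≤ C := by
        rw [hCdef, ← hr3]
        exact mul_le_mul_of_nonneg_left hcube (by positivity)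
      nlinarith [mul_nonneg hlam0.le hnp]
    · have hn0 : 0 < n := lt_trans hr0 hcase
      have hrp : r ^ (p - 3) ≤ n ^ (p - 3) :=
        Real.rpow_le_rpow hr0.le hcase.le hp3.le
      have hrpe : r ^ (p - 3) = M / lam0 := by
        rw [hrdef, rpow_rpow_eq hMl.le _ _ 1 (by field_simp), Real.rpow_one]
      have hMle : M ≤ lam0 * n ^ (p - 3) := by
        rw [hrpe] at hrp
        calc M = M / lam0 * lam0 := by field_simp
          _ ≤ n ^ (p - 3) * lam0 := mul_le_mul_of_nonneg_right hrp hlam0.le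
          _ = lam0 * n ^ (p - 3) := mul_comm _ _
      have hnpe : n ^ (p - 3) * n ^ 3 = n ^ p := by
        rw [← Real.rpow_natCast n 3, ← Real.rpow_add hn0]
        norm_num
      have hcube : M / 6 * n ^ 3 ≤ lam0 / 6 * n ^ p := by
        have h3 : (0:ℝ) ≤ n ^ 3 := by positivity
        calc M / 6 * n ^ 3 ≤ lam0 * n ^ (p - 3) / 6 * n ^ 3 := by
              exact mul_le_mul_of_nonneg_right (by linarith) h3
          _ = lam0 / 6 * (n ^ (p - 3) * n ^ 3) := by ring
          _ = lam0 / 6 * n ^ p := by rw [hnpe]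
      nlinarith
  -- telescoping sum
  have htel : ∑ k ∈ Finset.range K, (lam0 / 12 * ‖s k‖ ^ p - C) ≤ Δ := by
    calc ∑ k ∈ Finset.range K, (lam0 / 12 * ‖s k‖ ^ p - C)
        ≤ ∑ k ∈ Finset.range K, (f (x k) - f (x (k + 1))) :=
          Finset.sum_le_sum fun k hk => hstep k (Finset.mem_range.mp hk)
      _ = f (x 0) - f (x K) := Finset.sum_range_sub' (fun k => f (x k)) K
      _ ≤ Δ := by
          have := ciInf_le hbdd (x K)
          rw [hΔ]; linarith
  have hKne : (K:ℝ) ≠ 0 := by positivity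
  obtain ⟨k0, hk0mem, hk0⟩ :
      ∃ k0 ∈ Finset.range K, lam0 / 12 * ‖s k0‖ ^ p - C ≤ Δ / Kr := by
    apply Finset.exists_le_of_sum_le ⟨0, Finset.mem_range.mpr (by omega)⟩
    rw [Finset.sum_const, Finset.card_range, nsmul_eq_mul]
    rw [mul_div_cancel₀ _ hKne]
    exact htel
  have hk0K : k0 < K := Finset.mem_range.mp hk0mem
  -- identities
  have IQ : Kr ^ (p / 3) = Kr ^ ((p - 3) / 3) * Kr := by
    rw [← Real.rpow_add_one (by positivity) ((p - 3) / 3)]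
    ring_nf
  have I2 : (M / lam0) ^ (3 / (p - 3)) = (M / c) ^ (3 / (p - 3)) / Kr := by
    have h1 : M / lam0 = (M / c) / Kr ^ ((p - 3) / 3) := by
      rw [hlam0def]; field_simp
    rw [h1, Real.div_rpow hMc.le (by positivity),
      rpow_rpow_eq hKr0.le _ _ 1 (by field_simp), Real.rpow_one]
  -- bound on ‖s k0‖^p
  have hQ0 : (0:ℝ) < Kr ^ ((p - 3) / 3) := by positivity
  have hP0 : (0:ℝ) < Kr ^ (p / 3) := by positivity
  have hcne : c ≠ 0 := ne_of_gt hc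
  have hKrne : Kr ≠ 0 := ne_of_gt hKr0
  have hQne : Kr ^ ((p - 3) / 3) ≠ 0 := ne_of_gt hQ0
  have hpne : p ≠ 0 := ne_of_gt hp0
  have hp3ne : p - 3 ≠ 0 := ne_of_gt hp3
  have hsp : ‖s k0‖ ^ p ≤ A / (c * Kr ^ (p / 3)) := by
    have e : 12 / lam0 * (Δ / Kr + C) = A / (c * Kr ^ (p / 3)) := by
      rw [hCdef, I2, hAdef, hlam0def, IQ]
      field_simp
      ring
    have h2 : ‖s k0‖ ^ p ≤ 12 / lam0 * (Δ / Kr + C) := by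
      rw [div_mul_eq_mul_div, le_div_iff₀ hlam0]
      calc ‖s k0‖ ^ p * lam0 = 12 * (lam0 / 12 * ‖s k0‖ ^ p) := by ring
        _ ≤ 12 * (Δ / Kr + C) := by linarith
    rw [← e]; exact h2
  set σ : ℝ := (A / c) ^ ((1:ℝ) / p) / Kr ^ ((1:ℝ) / 3) with hσdef
  have hAc : (0:ℝ) < A / c := div_pos hA hc
  have hσ0 : 0 < σ := by positivity
  have hσp : σ ^ p = A / (c * Kr ^ (p / 3)) := by
    rw [hσdef, Real.div_rpow (by positivity) (by positivity),
      rpow_rpow_eq hAc.le _ _ 1 (by field_simp), Real.rpow_one,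
      rpow_rpow_eq hKr0.le _ _ (p / 3) (by ring), div_div]
  have hs_le : ‖s k0‖ ≤ σ := by
    refine (Real.rpow_le_rpow_iff (norm_nonneg _) hσ0.le hp0).mp ?_
    rw [hσp]; exact hsp
  -- gradient bound at k0 + 1
  have hgσ : ‖f' (x (k0 + 1))‖ ≤ M / 2 * σ ^ 2 + 3 * lam0 / 2 * σ ^ (p - 1) := by
    have ho := hopt k0
    rw [hlamdef k0 hk0K] at ho
    have h0 := step_grad f' H hf' M hlip p hp lam0 hlam0 (x k0) (s k0) ho
    rw [← hx k0] at h0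
    have m1 : ‖s k0‖ ^ 2 ≤ σ ^ 2 := pow_le_pow_left₀ (norm_nonneg _) hs_le 2
    have m2 : ‖s k0‖ ^ (p - 1) ≤ σ ^ (p - 1) :=
      Real.rpow_le_rpow (norm_nonneg _) hs_le (by linarith)
    have m1' := mul_le_mul_of_nonneg_left m1 (by positivity : (0:ℝ) ≤ M / 2)
    have m2' := mul_le_mul_of_nonneg_left m2 (by positivity : (0:ℝ) ≤ 3 * lam0 / 2)
    linarith
  -- rpow identities for the final computation
  have e_sig : σ ^ (p - 1) = (A / c) ^ (1 - 1 / p) / Kr ^ ((p - 1) / 3) := by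
    rw [hσdef, Real.div_rpow (by positivity) (by positivity),
      rpow_rpow_eq hAc.le _ _ (1 - 1 / p) (by field_simp),
      rpow_rpow_eq hKr0.le _ _ ((p - 1) / 3) (by ring)]
  have J2 : c * (A / c) ^ (1 - (1:ℝ) / p) = c ^ ((1:ℝ) / p) * A ^ (1 - 1 / p) := by
    have hcc : c ^ ((1:ℝ) / p) * c ^ (1 - (1:ℝ) / p) = c := by
      rw [← Real.rpow_add hc, show (1:ℝ) / p + (1 - 1 / p) = 1 by ring, Real.rpow_one]
    have hcp : c ^ (1 - (1:ℝ) / p) ≠ 0 := ne_of_gt (Real.rpow_pos_of_pos hc _)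
    rw [Real.div_rpow hA.le hc.le, mul_div_assoc', div_eq_iff hcp]
    linear_combination (-(A ^ (1 - (1:ℝ) / p))) * hcc
  have J1 : Kr ^ ((p - 3) / 3) / Kr ^ ((p - 1) / 3) = 1 / Kr ^ ((2:ℝ) / 3) := by
    rw [← Real.rpow_sub hKr0, show (p - 3) / 3 - (p - 1) / 3 = -((2:ℝ) / 3) by ring,
      Real.rpow_neg hKr0.le, one_div]
  have E1 : 3 * lam0 / 2 * σ ^ (p - 1)
      = 3 / 2 * (c ^ ((1:ℝ) / p) * A ^ (1 - 1 / p) / Kr ^ ((2:ℝ) / 3)) := by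
    calc 3 * lam0 / 2 * σ ^ (p - 1)
        = 3 / 2 * (c * (A / c) ^ (1 - (1:ℝ) / p))
            * (Kr ^ ((p - 3) / 3) / Kr ^ ((p - 1) / 3)) := by
          rw [hlam0def, e_sig]; ring
      _ = 3 / 2 * (c ^ ((1:ℝ) / p) * A ^ (1 - 1 / p)) * (1 / Kr ^ ((2:ℝ) / 3)) := by
          rw [J2, J1]
      _ = 3 / 2 * (c ^ ((1:ℝ) / p) * A ^ (1 - 1 / p) / Kr ^ ((2:ℝ) / 3)) := by ring
  -- key inequality for the quadratic term
  have key2 : M ≤ c ^ ((3:ℝ) / p) * A ^ (1 - (3:ℝ) / p) := by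
    refine (Real.rpow_le_rpow_iff hM.le (by positivity) hp0).mp ?_
    rw [Real.mul_rpow (by positivity) (by positivity),
      rpow_rpow_eq hc.le _ _ 3 (by field_simp),
      rpow_rpow_eq hA.le _ _ (p - 3) (by field_simp)]
    have hA1 : M * (M / c) ^ (3 / (p - 3)) ≤ A := by
      rw [hAdef]
      nlinarith [hMcr, hM, hΔ0]
    have hA2 : M ^ (p - 3) * (M ^ (3:ℝ) / c ^ (3:ℝ)) ≤ A ^ (p - 3) := by
      calc M ^ (p - 3) * (M ^ (3:ℝ) / c ^ (3:ℝ))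
          = (M * (M / c) ^ (3 / (p - 3))) ^ (p - 3) := by
            rw [Real.mul_rpow hM.le hMcr.le,
              rpow_rpow_eq hMc.le _ _ 3 (by field_simp), Real.div_rpow hM.le hc.le]
        _ ≤ A ^ (p - 3) := Real.rpow_le_rpow (by positivity) hA1 hp3.le
    have hMp : M ^ p = M ^ (p - 3) * M ^ (3:ℝ) := by
      rw [← Real.rpow_add hM]; congr 1; ring
    have hc3 : (0:ℝ) < c ^ (3:ℝ) := Real.rpow_pos_of_pos hc _
    calc M ^ p = c ^ (3:ℝ) * (M ^ (p - 3) * (M ^ (3:ℝ) / c ^ (3:ℝ))) := by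
          rw [hMp]; field_simp
      _ ≤ c ^ (3:ℝ) * A ^ (p - 3) := mul_le_mul_of_nonneg_left hA2 hc3.le
  have key3 : c ^ ((3:ℝ) / p) * A ^ (1 - (3:ℝ) / p) * (A / c) ^ ((2:ℝ) / p)
      = c ^ ((1:ℝ) / p) * A ^ (1 - 1 / p) := by
    rw [Real.div_rpow hA.le hc.le]
    have h1 : c ^ ((3:ℝ) / p) = c ^ ((1:ℝ) / p) * c ^ ((2:ℝ) / p) := by
      rw [← Real.rpow_add hc]; congr 1; ring
    have h2 : A ^ (1 - (3:ℝ) / p) * A ^ ((2:ℝ) / p) = A ^ (1 - (1:ℝ) / p) := by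
      rw [← Real.rpow_add hA]; congr 1; ring
    have hc2 : c ^ ((2:ℝ) / p) ≠ 0 := ne_of_gt (Real.rpow_pos_of_pos hc _)
    rw [mul_div_assoc', div_eq_iff hc2]
    linear_combination (A ^ (1 - (3:ℝ) / p) * A ^ ((2:ℝ) / p)) * h1
      + (c ^ ((1:ℝ) / p) * c ^ ((2:ℝ) / p)) * h2
  have key : M * (A / c) ^ ((2:ℝ) / p) ≤ c ^ ((1:ℝ) / p) * A ^ (1 - 1 / p) := by
    rw [← key3]
    exact mul_le_mul_of_nonneg_right key2 (Real.rpow_nonneg hAc.le _)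
  have σsq : σ ^ 2 = (A / c) ^ ((2:ℝ) / p) / Kr ^ ((2:ℝ) / 3) := by
    rw [hσdef, div_pow, rpow_pow_eq hAc.le ((1:ℝ)/p) 2 ((2:ℝ)/p) (by push_cast; ring),
      rpow_pow_eq hKr0.le ((1:ℝ)/3) 2 ((2:ℝ)/3) (by push_cast; ring)]
  have E2 : M / 2 * σ ^ 2
      ≤ 1 / 2 * (c ^ ((1:ℝ) / p) * A ^ (1 - 1 / p) / Kr ^ ((2:ℝ) / 3)) := by
    rw [σsq]
    have hpos : (0:ℝ) ≤ 1 / (2 * Kr ^ ((2:ℝ) / 3)) := by positivity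
    have h := mul_le_mul_of_nonneg_right key hpos
    calc M / 2 * ((A / c) ^ ((2:ℝ) / p) / Kr ^ ((2:ℝ) / 3))
        = M * (A / c) ^ ((2:ℝ) / p) * (1 / (2 * Kr ^ ((2:ℝ) / 3))) := by ring
      _ ≤ c ^ ((1:ℝ) / p) * A ^ (1 - 1 / p) * (1 / (2 * Kr ^ ((2:ℝ) / 3))) := h
      _ = 1 / 2 * (c ^ ((1:ℝ) / p) * A ^ (1 - 1 / p) / Kr ^ ((2:ℝ) / 3)) := by ring
  have hmem : k0 + 1 ∈ Finset.Icc 1 K := Finset.mem_Icc.mpr ⟨by omega, by omega⟩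
  calc (Finset.Icc 1 K).inf' (Finset.nonempty_Icc.mpr hK) (fun i => ‖f' (x i)‖)
      ≤ ‖f' (x (k0 + 1))‖ := Finset.inf'_le _ hmem
    _ ≤ M / 2 * σ ^ 2 + 3 * lam0 / 2 * σ ^ (p - 1) := hgσ
    _ ≤ 1 / 2 * (c ^ ((1:ℝ) / p) * A ^ (1 - 1 / p) / Kr ^ ((2:ℝ) / 3))
        + 3 / 2 * (c ^ ((1:ℝ) / p) * A ^ (1 - 1 / p) / Kr ^ ((2:ℝ) / 3)) :=
        add_le_add E2 (le_of_eq E1)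
    _ = 2 * c ^ ((1 : ℝ) / p) / Kr ^ ((2 : ℝ) / 3) * A ^ (1 - 1 / p) := by ring
end
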